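/- A bounded operator A on (H²)^⊥ = z̄·conj(H²) is a dual Toeplitz operator (i.e. A = T̃_φ for some φ ∈ L^∞) if and only if it satisfies the equation T̃_z A T̃_{z̄} = A. -/

import Mathlib

noncomputable section

open MeasureTheory Complex ComplexConjugate InnerProductSpace ContinuousLinearMap

namespace GSIO

instance : Fact (0 < 2 * Real.pi) := ⟨by positivity⟩

/-- The circle, modeled as `ℝ / 2πℤ`. -/
abbrev Circ : Type := AddCircle (2 * Real.pi)

/-- Normalized Haar (arc-length) measure on the circle. -/
abbrev μC : Measure Circ := AddCircle.haarAddCircle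

/-- `L²` of the circle. -/
abbrev L2 : Type := Lp ℂ 2 μC

/-- `L^∞` of the circle. -/
abbrev Linf : Type := Lp ℂ ⊤ μC

/-- The Hardy space `H²`: those `L²` functions whose negative Fourier coefficients vanish. -/
def Hardy : Submodule ℂ L2 where
  carrier := {f : L2 | ∀ n : ℤ, n < 0 → fourierCoeff (f : Circ → ℂ) n = 0}
  zero_mem' := by
    intro n hn
    rw [← fourierBasis_repr]
    simp
  add_mem' := by
    intro a b ha hb n hn
    have ha' := ha n hn
    have hb' := hb n hn
    rw [← fourierBasis_repr] at ha' hb' ⊢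
    rw [map_add, lp.coeFn_add, Pi.add_apply, ha', hb', add_zero]
  smul_mem' := by
    intro c a ha n hn
    have ha' := ha n hn
    rw [← fourierBasis_repr] at ha' ⊢
    rw [_root_.map_smul, lp.coeFn_smul, Pi.smul_apply, ha', smul_zero]

theorem isClosed_Hardy : IsClosed (Hardy : Set L2) := by
  have h : (Hardy : Set L2) =
      ⋂ n : {m : ℤ // m < 0}, (fun f : L2 =>
        (innerSL ℂ (fourierBasis (T := 2 * Real.pi) n.1)) f) ⁻¹' {0} := by
    ext f
    simp only [Set.mem_iInter, Set.mem_preimage, Set.mem_singleton_iff, SetLike.mem_coe]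
    constructor
    · intro hf n
      have h1 := hf n.1 n.2
      rw [← fourierBasis_repr, fourierBasis.repr_apply_apply] at h1
      simpa using h1
    · intro hf n hn
      have h1 := hf ⟨n, hn⟩
      rw [← fourierBasis_repr, fourierBasis.repr_apply_apply]
      simpa using h1
  rw [h]
  exact isClosed_iInter fun n =>
    isClosed_singleton.preimage (innerSL ℂ _).continuous

instance : CompleteSpace Hardy := isClosed_Hardy.completeSpace_coe

/-- The Riesz projection `P₊`, i.e. the orthogonal projection of `L²` onto `H²`. -/
def Pp : L2 →L[ℂ] L2 := Hardy.subtypeL.comp (Hardy.orthogonalProjectionOnto)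

/-- `P₋ = I − P₊`. -/
def Pm : L2 →L[ℂ] L2 := ContinuousLinearMap.id ℂ L2 - Pp

/-- The pointwise product of an `L^∞` function with an `L²` function, as an `L²` function. -/
def mulFun (φ : Linf) (x : L2) : L2 :=
  ((Lp.memLp x).smul (p := ⊤) (Lp.memLp φ)).toLp ((φ : Circ → ℂ) • (x : Circ → ℂ))

theorem mulFun_add (φ : Linf) (x y : L2) : mulFun φ (x + y) = mulFun φ x + mulFun φ y := by
  rw [mulFun, mulFun, mulFun, ← MemLp.toLp_add]
  apply MemLp.toLp_congr
  filter_upwards [Lp.coeFn_add x y] with t ht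
  have ht' : ((x + y : L2) : Circ → ℂ) t = (x : Circ → ℂ) t + (y : Circ → ℂ) t := by
    simpa using ht
  simp only [Pi.mul_apply, Pi.smul_apply, Pi.add_apply, smul_eq_mul, ht']
  ring

theorem mulFun_smul (c : ℂ) (φ : Linf) (x : L2) : mulFun φ (c • x) = c • mulFun φ x := by
  rw [mulFun, mulFun, ← MemLp.toLp_const_smul]
  apply MemLp.toLp_congr
  filter_upwards [Lp.coeFn_smul c x] with t ht
  have ht' : ((c • x : L2) : Circ → ℂ) t = c * (x : Circ → ℂ) t := by
    simpa using ht
  simp only [Pi.mul_apply, Pi.smul_apply, smul_eq_mul, ht']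
  ring

theorem norm_mulFun_le (φ : Linf) (x : L2) : ‖mulFun φ x‖ ≤ ‖φ‖ * ‖x‖ := by
  rw [mulFun, Lp.norm_toLp]
  have h := eLpNorm_smul_le_eLpNorm_top_mul_eLpNorm (μ := μC) 2
    (Lp.aestronglyMeasurable x) (φ : Circ → ℂ)
  refine le_trans (ENNReal.toReal_mono ?_ h) ?_
  · exact ENNReal.mul_ne_top (Lp.eLpNorm_ne_top φ) (Lp.eLpNorm_ne_top x)
  · rw [ENNReal.toReal_mul, Lp.norm_def, Lp.norm_def]

/-- The multiplication operator `M_φ` on `L²`, for `φ ∈ L^∞`. -/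
def mul (φ : Linf) : L2 →L[ℂ] L2 :=
  LinearMap.mkContinuous
    { toFun := mulFun φ
      map_add' := mulFun_add φ
      map_smul' := fun c x => mulFun_smul c φ x }
    ‖φ‖ (fun x => norm_mulFun_le φ x)

/-- Pointwise product in `L^∞`. -/
def mulInf (φ ψ : Linf) : Linf :=
  ((Lp.memLp ψ).smul (p := ⊤) (Lp.memLp φ)).toLp ((φ : Circ → ℂ) • (ψ : Circ → ℂ))

/-- Complex conjugation on `L^∞`. -/
def conjInf (φ : Linf) : Linf :=
  (show MemLp (fun t => star ((φ : Circ → ℂ) t)) ⊤ μC from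
    ⟨continuous_star.comp_aestronglyMeasurable (Lp.aestronglyMeasurable φ), by
      rw [eLpNorm_congr_norm_ae (g := (φ : Circ → ℂ))
        (Filter.Eventually.of_forall fun t => norm_star _)]
      exact Lp.eLpNorm_lt_top φ⟩).toLp _

/-- Complex conjugation on `L²`. -/
def conjL2 (x : L2) : L2 :=
  (show MemLp (fun t => star ((x : Circ → ℂ) t)) 2 μC from
    ⟨continuous_star.comp_aestronglyMeasurable (Lp.aestronglyMeasurable x), by
      rw [eLpNorm_congr_norm_ae (g := (x : Circ → ℂ))
        (Filter.Eventually.of_forall fun t => norm_star _)]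
      exact Lp.eLpNorm_lt_top x⟩).toLp _

/-- The inclusion `L^∞ ⊆ L²` (the measure is finite). -/
def toL2 (φ : Linf) : L2 := ((Lp.memLp φ).mono_exponent le_top).toLp φ

/-- The constant function `c` as an element of `L^∞`. -/
def constInf (c : ℂ) : Linf := (memLp_const c).toLp (fun _ => c)

/-- An `L^∞` function is constant (a.e.). -/
def IsConst (φ : Linf) : Prop := ∃ c : ℂ, φ = constInf c

/-- `φ ∈ H^∞ = L^∞ ∩ H²`: the negative Fourier coefficients of `φ` vanish. -/
def MemHinf (φ : Linf) : Prop := ∀ n : ℤ, n < 0 → fourierCoeff (φ : Circ → ℂ) n = 0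

/-- The coordinate function `z` as an element of `L^∞`. -/
def zInf : Linf := fourierLp (T := 2 * Real.pi) ⊤ 1

/-- The function `z̄` as an element of `L^∞`. -/
def zbarInf : Linf := fourierLp (T := 2 * Real.pi) ⊤ (-1)

/-- The antiunitary operator `V : h ↦ z̄ ⬝ conj h` on `L²`. -/
def Vmap (x : L2) : L2 := mul zbarInf (conjL2 x)

/-- `φ₋ = P₋ φ` for `φ ∈ L^∞`, viewed inside `L²`. -/
def mI (φ : Linf) : L2 := Pm (toL2 φ)

/-- The rank-one operator `p ⊗ q : x ↦ ⟪x, q⟫ · p` (the inner product being conjugate-linear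
in `q`). -/
def rankOne {E : Type*} [NormedAddCommGroup E] [InnerProductSpace ℂ E] (p q : E) : E →L[ℂ] E :=
  (innerSL ℂ q).smulRight p

/-- The Hilbert space direct sum `L² ⊕ L²`. -/
abbrev L2sq : Type := WithLp 2 (L2 × L2)

/-- A pair of `L²` functions, viewed as a vector in `L² ⊕ L²`. -/
def pair (x y : L2) : L2sq := (WithLp.equiv 2 (L2 × L2)).symm (x, y)

/-- Notation for the pointwise product in `L^∞`. -/
scoped infixl:70 " ⊙ " => GSIO.mulInf

/-- The Toeplitz operator `T_φ = P₊ M_φ P₊` (viewed as acting on the corner `H²` of `L²`). -/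
def Toeplitz (φ : Linf) : L2 →L[ℂ] L2 := Pp ∘L mul φ ∘L Pp

/-- The Hankel operator `H_φ = P₋ M_φ P₊ : H² → (H²)^⊥` (as a corner operator on `L²`). -/
def Hankel (φ : Linf) : L2 →L[ℂ] L2 := Pm ∘L mul φ ∘L Pp

/-- The dual Toeplitz operator `T̃_φ = P₋ M_φ P₋` on `(H²)^⊥` (as a corner operator on `L²`). -/
def dualToeplitz (φ : Linf) : L2 →L[ℂ] L2 := Pm ∘L mul φ ∘L Pm

/-- The generalized Cauchy singular integral operator with symbol `[[f, u], [g, v]]`: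
`R x = P₊ f P₊ x + P₋ g P₊ x + P₊ u P₋ x + P₋ v P₋ x`. -/
def Rop (f u g v : Linf) : L2 →L[ℂ] L2 :=
  Pp ∘L mul f ∘L Pp + Pm ∘L mul g ∘L Pp + Pp ∘L mul u ∘L Pm + Pm ∘L mul v ∘L Pm

/-- The singular integral operator `S_{f,g} = M_f P₊ + M_g P₋` on `L²`. -/
def Sop (f g : Linf) : L2 →L[ℂ] L2 := mul f ∘L Pp + mul g ∘L Pm



/-- Negation `t ↦ -t` preserves the Haar measure of the circle. -/
theorem mp_neg : MeasurePreserving (fun t : Circ => -t) μC μC :=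
  Measure.measurePreserving_neg μC

/-- Composition with `t ↦ -t` on `L²`. -/
def reflL2 : L2 →L[ℂ] L2 :=
  (Lp.compMeasurePreservingₗᵢ ℂ (fun t : Circ => -t) mp_neg).toContinuousLinearMap

/-- Composition with `t ↦ -t` on `L^∞`: for `φ ∈ L^∞`, `φ̃(z) = φ(z̄)`. -/
def reflInf (φ : Linf) : Linf := Lp.compMeasurePreserving (fun t : Circ => -t) mp_neg φ

/-- `φ* (z) = conj (φ(z̄))`. -/
def starInf (φ : Linf) : Linf := conjInf (reflInf φ)

/-- The flip operator `J : (Jh)(z) = z̄ · h(z̄)` on `L²`. -/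
def Jop : L2 →L[ℂ] L2 := mul zbarInf ∘L reflL2

/-- The Hankel operator `𝕳_φ = P₊ M_φ J` on `H²` (as a corner operator on `L²`). -/
def HankelPlus (φ : Linf) : L2 →L[ℂ] L2 := Pp ∘L mul φ ∘L Jop ∘L Pp

/-- The adjoint `H*_φ` of the Hankel operator `H_φ`. -/
def HankelAdj (φ : Linf) : L2 →L[ℂ] L2 := ContinuousLinearMap.adjoint (Hankel φ)

/-- `θ ∈ L^∞` is an inner function: `θ ∈ H^∞` and `|θ| = 1` a.e. -/
def IsInner (θ : Linf) : Prop := MemHinf θ ∧ ∀ᵐ t ∂μC, ‖(θ : Circ → ℂ) t‖ = 1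

/-- The orthogonal projection of `L²` onto `K_θ^⊥ = θH² ⊕ z̄·conj(H²)`, namely
`P₋ + M_θ P₊ M_{conj θ}`. -/
def Qproj (θ : Linf) : L2 →L[ℂ] L2 := Pm + mul θ ∘L Pp ∘L mul (conjInf θ)

/-! ### Auxiliary material for Statement 3 -/

section Statement3Aux

open Filter Topology
open scoped InnerProductSpace

/-- The Fourier basis vectors of `L²`. -/
abbrev eB (n : ℤ) : L2 := fourierBasis (T := 2 * Real.pi) n

lemma inner_eB (m : ℤ) (x : L2) :
    ⟪eB m, x⟫_ℂ = fourierCoeff (x : Circ → ℂ) m := by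
  rw [← fourierBasis_repr, fourierBasis.repr_apply_apply]

lemma L2_ext {x y : L2}
    (h : ∀ m : ℤ, fourierCoeff (x : Circ → ℂ) m = fourierCoeff (y : Circ → ℂ) m) : x = y := by
  apply fourierBasis.repr.injective
  ext m
  rw [fourierBasis_repr, fourierBasis_repr]
  exact h m

lemma L2_ext_inner {x y : L2} (h : ∀ m : ℤ, ⟪eB m, x⟫_ℂ = ⟪eB m, y⟫_ℂ) : x = y := by
  apply L2_ext
  intro m
  rw [← inner_eB, ← inner_eB]
  exact h m

lemma fourierCoeff_congr_ae {f g : Circ → ℂ} (h : f =ᵐ[μC] g) (n : ℤ) :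
    fourierCoeff f n = fourierCoeff g n := by
  unfold fourierCoeff
  apply integral_congr_ae
  filter_upwards [h] with t ht
  rw [ht]

lemma fourierCoeff_fourier_mul (j : ℤ) (x : Circ → ℂ) (m : ℤ) :
    fourierCoeff (fun t => fourier j t * x t) m = fourierCoeff x (m - j) := by
  unfold fourierCoeff
  congr 1
  funext t
  simp only [smul_eq_mul, ← mul_assoc]
  congr 1
  rw [← fourier_add]
  congr 1
  ring

lemma coeFn_mul (φ : Linf) (x : L2) :
    ((mul φ x : L2) : Circ → ℂ) =ᵐ[μC] fun t => (φ : Circ → ℂ) t * (x : Circ → ℂ) t := by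
  have : (mul φ x : L2) = mulFun φ x := rfl
  rw [this, mulFun]
  filter_upwards [MemLp.coeFn_toLp (((Lp.memLp x).smul (p := ⊤) (r := 2) (Lp.memLp φ)))] with t ht
  rw [ht]
  simp [mul_comm]

lemma coeFn_zInf : ((zInf : Linf) : Circ → ℂ) =ᵐ[μC] fun t => fourier 1 t :=
  coeFn_fourierLp ⊤ 1

lemma coeFn_zbarInf : ((zbarInf : Linf) : Circ → ℂ) =ᵐ[μC] fun t => fourier (-1) t :=
  coeFn_fourierLp ⊤ (-1)

lemma fourierCoeff_mul_zInf (x : L2) (m : ℤ) :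
    fourierCoeff ((mul zInf x : L2) : Circ → ℂ) m = fourierCoeff (x : Circ → ℂ) (m - 1) := by
  rw [fourierCoeff_congr_ae (f := ((mul zInf x : L2) : Circ → ℂ))
    (g := fun t => fourier 1 t * (x : Circ → ℂ) t) ?_ m]
  · exact fourierCoeff_fourier_mul 1 _ m
  · filter_upwards [coeFn_mul zInf x, coeFn_zInf] with t h1 h2
    rw [h1, h2]

lemma fourierCoeff_mul_zbarInf (x : L2) (m : ℤ) :
    fourierCoeff ((mul zbarInf x : L2) : Circ → ℂ) m = fourierCoeff (x : Circ → ℂ) (m + 1) := by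
  rw [fourierCoeff_congr_ae (f := ((mul zbarInf x : L2) : Circ → ℂ))
    (g := fun t => fourier (-1) t * (x : Circ → ℂ) t) ?_ m]
  · rw [fourierCoeff_fourier_mul (-1) _ m]; congr 1
  · filter_upwards [coeFn_mul zbarInf x, coeFn_zbarInf] with t h1 h2
    rw [h1, h2]

lemma fourierCoeff_eB (n m : ℤ) :
    fourierCoeff ((eB n : L2) : Circ → ℂ) m = if m = n then 1 else 0 := by
  rw [← fourierBasis_repr, fourierBasis.repr_self, lp.single_apply]
  simp [Pi.single_apply, eq_comm]

lemma eB_mem_Hardy {n : ℤ} (hn : 0 ≤ n) : eB n ∈ Hardy := by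
  intro m hm
  rw [fourierCoeff_eB]
  rw [if_neg]
  omega

lemma eB_mem_orth {n : ℤ} (hn : n < 0) : eB n ∈ Hardyᗮ := by
  intro f hf
  rw [← inner_conj_symm, inner_eB, hf n hn, map_zero]

lemma norm_eB (n : ℤ) : ‖eB n‖ = 1 := fourierBasis.orthonormal.1 n

lemma Pp_eB (n : ℤ) : Pp (eB n) = if 0 ≤ n then eB n else 0 := by
  by_cases hn : 0 ≤ n
  · rw [if_pos hn]
    exact Hardy.starProjection_eq_self_iff.mpr (eB_mem_Hardy hn)
  · rw [if_neg hn]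
    show (Hardy.orthogonalProjectionOnto (eB n) : L2) = 0
    rw [Submodule.orthogonalProjectionOnto_apply_of_mem_orthogonal
      (eB_mem_orth (by omega))]
    rfl

lemma Pm_eB (n : ℤ) : Pm (eB n) = if n < 0 then eB n else 0 := by
  rw [Pm, ContinuousLinearMap.sub_apply, ContinuousLinearMap.id_apply, Pp_eB]
  by_cases hn : 0 ≤ n
  · rw [if_pos hn, if_neg (by omega), sub_self]
  · rw [if_neg hn, if_pos (by omega), sub_zero]

lemma Pm_mem_orth (x : L2) : Pm x ∈ Hardyᗮ := by
  have := Submodule.sub_starProjection_mem_orthogonal (K := Hardy) x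
  exact this

lemma Pp_mem (x : L2) : Pp x ∈ Hardy := (Hardy.orthogonalProjectionOnto x).2

lemma inner_eB_Pm_of_nonneg {m : ℤ} (hm : 0 ≤ m) (x : L2) : ⟪eB m, Pm x⟫_ℂ = 0 :=
  Submodule.inner_right_of_mem_orthogonal (eB_mem_Hardy hm) (Pm_mem_orth x)

lemma inner_eB_Pm_of_neg {m : ℤ} (hm : m < 0) (x : L2) : ⟪eB m, Pm x⟫_ℂ = ⟪eB m, x⟫_ℂ := by
  have h0 : ⟪eB m, Pp x⟫_ℂ = 0 :=
    Submodule.inner_left_of_mem_orthogonal (Pp_mem x) (eB_mem_orth hm)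
  have : Pm x = x - Pp x := rfl
  rw [this, inner_sub_right, h0, sub_zero]

lemma mul_zbarInf_eB (n : ℤ) : mul zbarInf (eB n) = eB (n - 1) := by
  apply L2_ext
  intro m
  rw [fourierCoeff_mul_zbarInf, fourierCoeff_eB, fourierCoeff_eB]
  by_cases h : m = n - 1
  · rw [if_pos h, if_pos (by omega)]
  · rw [if_neg h, if_neg (by omega)]

/-- The matrix entries of a dual Toeplitz operator. -/
lemma entry_dualToeplitz (φ : Linf) (m n : ℤ) :
    ⟪eB m, dualToeplitz φ (eB n)⟫_ℂ =
      if m < 0 ∧ n < 0 then fourierCoeff ((φ : Linf) : Circ → ℂ) (m - n) else 0 := by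
  rw [dualToeplitz]
  simp only [ContinuousLinearMap.comp_apply]
  by_cases hn : n < 0
  · rw [Pm_eB, if_pos hn]
    by_cases hm : m < 0
    · rw [if_pos ⟨hm, hn⟩, inner_eB_Pm_of_neg hm, inner_eB]
      rw [fourierCoeff_congr_ae (coeFn_mul φ (eB n)), fourierCoeff_congr_ae
        (g := fun t => fourier n t * (φ : Circ → ℂ) t) ?_ m]
      · rw [fourierCoeff_fourier_mul]
      · have he : (eB n : L2) = fourierLp 2 n := congrFun (coe_fourierBasis (T := 2 * Real.pi)) n
        rw [he]
        filter_upwards [coeFn_fourierLp (T := 2 * Real.pi) 2 n] with t ht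
        rw [ht, mul_comm]
    · rw [if_neg (by tauto), inner_eB_Pm_of_nonneg (by omega)]
  · rw [Pm_eB, if_neg hn, if_neg (by tauto), map_zero, map_zero, inner_zero_right]

/-- Shift identity for matrix entries of `T̃_z ∘ B ∘ T̃_z̄`. -/
lemma entry_comp_shift (B : L2 →L[ℂ] L2) {m n : ℤ} (hm : m < 0) (hn : n < 0) :
    ⟪eB m, (dualToeplitz zInf ∘L B ∘L dualToeplitz zbarInf) (eB n)⟫_ℂ =
      ⟪eB (m - 1), B (eB (n - 1))⟫_ℂ := by
  simp only [ContinuousLinearMap.comp_apply]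
  have h1 : dualToeplitz zbarInf (eB n) = eB (n - 1) := by
    rw [dualToeplitz]
    simp only [ContinuousLinearMap.comp_apply]
    rw [Pm_eB, if_pos hn, mul_zbarInf_eB, Pm_eB, if_pos (by omega)]
  rw [h1, dualToeplitz]
  simp only [ContinuousLinearMap.comp_apply]
  rw [inner_eB_Pm_of_neg hm, inner_eB, fourierCoeff_mul_zInf, ← inner_eB,
    inner_eB_Pm_of_neg (by omega)]

lemma entry_comp_of_left_nonneg (B : L2 →L[ℂ] L2) {m : ℤ} (hm : 0 ≤ m) (x : L2) :
    ⟪eB m, (dualToeplitz zInf ∘L B ∘L dualToeplitz zbarInf) x⟫_ℂ = 0 := by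
  simp only [ContinuousLinearMap.comp_apply, dualToeplitz]
  exact inner_eB_Pm_of_nonneg hm _

lemma comp_of_right_nonneg (B : L2 →L[ℂ] L2) {n : ℤ} (hn : 0 ≤ n) :
    (dualToeplitz zInf ∘L B ∘L dualToeplitz zbarInf) (eB n) = 0 := by
  simp only [ContinuousLinearMap.comp_apply, dualToeplitz]
  rw [Pm_eB, if_neg (by omega)]
  simp

lemma CLM_ext_basis {S T : L2 →L[ℂ] L2} (h : ∀ n : ℤ, S (eB n) = T (eB n)) : S = T := by
  refine ContinuousLinearMap.ext_on
    (Submodule.dense_iff_topologicalClosure_eq_top.mpr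
      (fourierBasis (T := 2 * Real.pi)).dense_span) ?_
  rintro x ⟨n, rfl⟩
  exact h n

section Converse

variable (A : L2 →L[ℂ] L2)

/-- The matrix entries of `A` in the Fourier basis. -/
def aM (m n : ℤ) : ℂ := ⟪eB m, A (eB n)⟫_ℂ

/-- The candidate Fourier coefficients of the symbol of `A`. -/
def cS (k : ℤ) : ℂ := aM A (k + (-1 - max k 0)) (-1 - max k 0)

variable {A}

lemma aM_zero_left (hA : Pm ∘L A ∘L Pm = A) {m : ℤ} (hm : 0 ≤ m) (n : ℤ) : aM A m n = 0 := by
  rw [aM, ← hA]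
  simp only [ContinuousLinearMap.comp_apply]
  exact inner_eB_Pm_of_nonneg hm _

lemma aM_zero_right (hA : Pm ∘L A ∘L Pm = A) (m : ℤ) {n : ℤ} (hn : 0 ≤ n) : aM A m n = 0 := by
  rw [aM, ← hA]
  simp only [ContinuousLinearMap.comp_apply]
  rw [Pm_eB, if_neg (by omega)]
  simp

lemma aM_shift (h : dualToeplitz zInf ∘L A ∘L dualToeplitz zbarInf = A)
    {m n : ℤ} (hm : m < 0) (hn : n < 0) : aM A (m - 1) (n - 1) = aM A m n := by
  rw [aM, aM, ← entry_comp_shift A hm hn, h]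

lemma aM_shift_nat (h : dualToeplitz zInf ∘L A ∘L dualToeplitz zbarInf = A)
    (t : ℕ) {m n : ℤ} (hm : m < 0) (hn : n < 0) :
    aM A (m - t) (n - t) = aM A m n := by
  induction t with
  | zero => simp
  | succ s ih =>
    have h1 : m - (s + 1 : ℕ) = (m - s) - 1 := by push_cast; ring
    have h2 : n - (s + 1 : ℕ) = (n - s) - 1 := by push_cast; ring
    rw [h1, h2, aM_shift h (by omega) (by omega), ih]

lemma aM_eq_cS (h : dualToeplitz zInf ∘L A ∘L dualToeplitz zbarInf = A)
    {m n : ℤ} (hm : m < 0) (hn : n < 0) : aM A m n = cS A (m - n) := by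
  set k : ℤ := m - n with hk
  have hmax1 : k ≤ max k 0 := le_max_left _ _
  have hmax2 : (0 : ℤ) ≤ max k 0 := le_max_right _ _
  set D : ℤ := -1 - max k 0 with hD
  rw [cS]
  rcases le_or_gt D n with hDn | hnD
  · -- shift (m, n) down by n - D
    have ht : ((n - D).toNat : ℤ) = n - D := Int.toNat_of_nonneg (by omega)
    have := aM_shift_nat h (n - D).toNat hm hn
    rw [ht] at this
    rw [← this]
    congr 1 <;> omega
  · -- shift (k + D, D) down by D - n
    have ht : ((D - n).toNat : ℤ) = D - n := Int.toNat_of_nonneg (by omega)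
    have := aM_shift_nat h (D - n).toNat (m := k + D) (n := D) (by omega) (by omega)
    rw [ht] at this
    rw [← this]
    congr 1 <;> omega

lemma eB_comp_orthonormal (D : ℤ) : Orthonormal ℂ (fun k : ℤ => eB (k + D)) :=
  (fourierBasis (T := 2 * Real.pi)).orthonormal.comp _ (fun a b hab => by omega)

lemma sum_cS_sq_le (hA : Pm ∘L A ∘L Pm = A)
    (h : dualToeplitz zInf ∘L A ∘L dualToeplitz zbarInf = A) (F : Finset ℤ) :
    ∑ k ∈ F, ‖cS A k‖ ^ 2 ≤ ‖A‖ ^ 2 := by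
  classical
  set M : ℤ := ∑ k ∈ F, |k| with hM
  have habs : ∀ k ∈ F, |k| ≤ M := by
    intro k hk
    exact Finset.single_le_sum (f := fun k => |k|) (fun i _ => abs_nonneg i) hk
  set D : ℤ := -1 - M with hDdef
  have hM0 : 0 ≤ M := Finset.sum_nonneg fun i _ => abs_nonneg i
  have hcs : ∀ k ∈ F, cS A k = ⟪eB (k + D), A (eB D)⟫_ℂ := by
    intro k hk
    have h1 : |k| ≤ M := habs k hk
    have h2 : k ≤ |k| := le_abs_self k
    have h3 : -k ≤ |k| := neg_le_abs k
    have := aM_eq_cS h (m := k + D) (n := D) (by omega) (by omega)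
    rw [add_sub_cancel_right] at this
    rw [← this]
    rfl
  calc ∑ k ∈ F, ‖cS A k‖ ^ 2 = ∑ k ∈ F, ‖⟪eB (k + D), A (eB D)⟫_ℂ‖ ^ 2 := by
        apply Finset.sum_congr rfl
        intro k hk
        rw [hcs k hk]
    _ ≤ ‖A (eB D)‖ ^ 2 := (eB_comp_orthonormal D).sum_inner_products_le _
    _ ≤ ‖A‖ ^ 2 := by
        have h1 : ‖A (eB D)‖ ≤ ‖A‖ := by
          calc ‖A (eB D)‖ ≤ ‖A‖ * ‖eB D‖ := A.le_opNorm _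
            _ = ‖A‖ := by rw [norm_eB, mul_one]
        exact pow_le_pow_left₀ (norm_nonneg _) h1 2

lemma summable_cS_sq (hA : Pm ∘L A ∘L Pm = A)
    (h : dualToeplitz zInf ∘L A ∘L dualToeplitz zbarInf = A) :
    Summable (fun k => ‖cS A k‖ ^ 2) :=
  summable_of_sum_le (fun k => sq_nonneg _) (sum_cS_sq_le hA h)

lemma memℓp_cS (hA : Pm ∘L A ∘L Pm = A)
    (h : dualToeplitz zInf ∘L A ∘L dualToeplitz zbarInf = A) :
    Memℓp (cS A) 2 := by
  apply memℓp_gen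
  have h2 : ENNReal.toReal 2 = (2 : ℝ) := by norm_num
  rw [h2]
  have := summable_cS_sq hA h
  convert this using 2 with k
  rw [← Real.rpow_natCast ‖cS A k‖ 2]
  norm_num

/-- The number of pairs `(k, j)` in `[0, N)²` with `j - k = m`. -/
def cnt (N : ℕ) (m : ℤ) : ℕ :=
  ((Finset.range N ×ˢ Finset.range N).filter fun p => ((p.2 : ℤ) - (p.1 : ℤ) = m)).card

lemma cnt_eq_card_Ico (N : ℕ) (m : ℤ) :
    cnt N m = (Finset.Ico (max 0 (-m)) (min (N : ℤ) ((N : ℤ) - m))).card := by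
  rw [cnt]
  apply Finset.card_bij' (i := fun p _ => ((p.1 : ℤ)))
    (j := fun x _ => (x.toNat, (x + m).toNat))
  · intro p hp
    simp only [Finset.mem_filter, Finset.mem_product, Finset.mem_range] at hp
    simp only [Finset.mem_Ico]
    omega
  · intro x hx
    simp only [Finset.mem_Ico] at hx
    simp only [Finset.mem_filter, Finset.mem_product, Finset.mem_range]
    omega
  · intro p hp
    simp only [Finset.mem_filter, Finset.mem_product, Finset.mem_range] at hp
    ext <;> simp <;> omega
  · intro x hx
    simp only [Finset.mem_Ico] at hx
    simp
    omega

lemma cnt_le (N : ℕ) (m : ℤ) : cnt N m ≤ N := by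
  have h := cnt_eq_card_Ico N m
  rw [Int.card_Ico] at h
  omega

lemma cnt_eq_of_le (N : ℕ) (m : ℤ) (h : m.natAbs ≤ N) : (cnt N m : ℤ) = (N : ℤ) - m.natAbs := by
  have h2 := cnt_eq_card_Ico N m
  rw [Int.card_Ico] at h2
  omega

variable (A)

/-- The Fejér-type means of the candidate symbol, as honest functions. -/
def gN (N : ℕ) (t : Circ) : ℂ :=
  (N : ℂ)⁻¹ * ∑ p ∈ Finset.range N ×ˢ Finset.range N,
    fourier ((p.2 : ℤ) - (p.1 : ℤ)) t * cS A ((p.2 : ℤ) - (p.1 : ℤ))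

/-- The Fejér-type means of the candidate symbol, as elements of `L²`. -/
def GN (N : ℕ) : L2 :=
  (N : ℂ)⁻¹ • ∑ p ∈ Finset.range N ×ˢ Finset.range N,
    cS A ((p.2 : ℤ) - (p.1 : ℤ)) • eB ((p.2 : ℤ) - (p.1 : ℤ))

lemma coeFn_eB (n : ℤ) : ((eB n : L2) : Circ → ℂ) =ᵐ[μC] fun t => fourier n t := by
  have he : (eB n : L2) = fourierLp 2 n := congrFun (coe_fourierBasis (T := 2 * Real.pi)) n
  rw [he]
  exact coeFn_fourierLp 2 n

lemma coeFn_sum_smul_eB {ι : Type*} (s : Finset ι) (c : ι → ℂ) (d : ι → ℤ) :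
    (((∑ i ∈ s, c i • eB (d i) : L2)) : Circ → ℂ) =ᵐ[μC]
      fun t => ∑ i ∈ s, c i * fourier (d i) t := by
  classical
  induction s using Finset.induction with
  | empty =>
    simp only [Finset.sum_empty]
    filter_upwards [Lp.coeFn_zero ℂ 2 μC] with t ht
    simpa using ht
  | @insert i s his ih =>
    rw [Finset.sum_insert his]
    filter_upwards [Lp.coeFn_add (c i • eB (d i)) (∑ x ∈ s, c x • eB (d x)),
      Lp.coeFn_smul (c i) (eB (d i)), coeFn_eB (d i), ih] with t h1 h2 h3 h4
    rw [h1]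
    simp only [Pi.add_apply]
    rw [h4, Finset.sum_insert his, h2]
    simp only [Pi.smul_apply, smul_eq_mul, h3]

lemma coeFn_GN (N : ℕ) : ((GN A N : L2) : Circ → ℂ) =ᵐ[μC] gN A N := by
  rw [GN]
  filter_upwards [Lp.coeFn_smul ((N : ℂ)⁻¹)
    (∑ p ∈ Finset.range N ×ˢ Finset.range N,
      cS A ((p.2 : ℤ) - (p.1 : ℤ)) • eB ((p.2 : ℤ) - (p.1 : ℤ))),
    coeFn_sum_smul_eB (Finset.range N ×ˢ Finset.range N)
      (fun p => cS A ((p.2 : ℤ) - (p.1 : ℤ))) (fun p => ((p.2 : ℤ) - (p.1 : ℤ)))] with t h1 h2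
  rw [h1]
  simp only [Pi.smul_apply, smul_eq_mul, h2, gN]
  congr 1
  apply Finset.sum_congr rfl
  intro p _
  ring

/-- Expansion of the quadratic form of `B` on a vector supported on negative frequencies. -/
lemma inner_sum_smul (B : L2 →L[ℂ] L2) (N : ℕ) (lam : ℕ → ℂ) :
    ⟪∑ k ∈ Finset.range N, lam k • eB (-1 - k),
        B (∑ j ∈ Finset.range N, lam j • eB (-1 - j))⟫_ℂ =
      ∑ k ∈ Finset.range N, ∑ j ∈ Finset.range N,
        conj (lam k) * lam j * aM B (-1 - k) (-1 - j) := by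
  have hB : B (∑ j ∈ Finset.range N, lam j • eB (-1 - j))
      = ∑ j ∈ Finset.range N, lam j • B (eB (-1 - j)) := by
    rw [map_sum]
    exact Finset.sum_congr rfl fun j _ => map_smul B _ _
  rw [hB, inner_sum]
  simp_rw [inner_smul_right, sum_inner, inner_smul_left, Finset.mul_sum]
  rw [Finset.sum_comm]
  refine Finset.sum_congr rfl fun k _ => Finset.sum_congr rfl fun j _ => ?_
  rw [aM]
  ring

lemma aM_id (m n : ℤ) : aM (ContinuousLinearMap.id ℂ L2) m n = if m = n then 1 else 0 := by
  rw [aM, ContinuousLinearMap.id_apply, inner_eB, fourierCoeff_eB]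

lemma norm_fourier (n : ℤ) (t : Circ) : ‖fourier n t‖ = 1 := by
  rw [fourier_apply, Circle.norm_coe]

lemma gN_bound {A : L2 →L[ℂ] L2}
    (h : dualToeplitz zInf ∘L A ∘L dualToeplitz zbarInf = A)
    (N : ℕ) (hN : 1 ≤ N) (t : Circ) : ‖gN A N t‖ ≤ ‖A‖ := by
  classical
  set lam : ℕ → ℂ := fun j => fourier ((j : ℤ) + 1) t with hlam
  set x : L2 := ∑ j ∈ Finset.range N, lam j • eB (-1 - (j : ℤ)) with hx
  have hnormlam : ∀ j : ℕ, ‖lam j‖ = 1 := fun j => norm_fourier _ t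
  have hconjmul : ∀ k : ℕ, conj (lam k) * lam k = 1 := by
    intro k
    have hk := hnormlam k
    rw [mul_comm, Complex.mul_conj, Complex.normSq_eq_norm_sq, hk]
    norm_num
  have hxx : ⟪x, x⟫_ℂ = (N : ℂ) := by
    have hexp := inner_sum_smul (ContinuousLinearMap.id ℂ L2) N lam
    simp only [ContinuousLinearMap.id_apply] at hexp
    rw [hx, hexp]
    have : ∀ k ∈ Finset.range N, (∑ j ∈ Finset.range N,
        conj (lam k) * lam j * aM (ContinuousLinearMap.id ℂ L2) (-1 - (k : ℤ)) (-1 - (j : ℤ)))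
        = 1 := by
      intro k hk
      rw [Finset.sum_eq_single k]
      · rw [aM_id, if_pos rfl, mul_one, hconjmul]
      · intro j _ hne
        rw [aM_id, if_neg (by omega), mul_zero]
      · intro hk'
        exact absurd hk hk'
    rw [Finset.sum_congr rfl this]
    simp
  have hxA : ⟪x, A x⟫_ℂ = ∑ p ∈ Finset.range N ×ˢ Finset.range N,
      fourier ((p.2 : ℤ) - (p.1 : ℤ)) t * cS A ((p.2 : ℤ) - (p.1 : ℤ)) := by
    rw [hx, inner_sum_smul A N lam, Finset.sum_product]
    refine Finset.sum_congr rfl fun k _ => Finset.sum_congr rfl fun j _ => ?_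
    have h1 : aM A (-1 - (k : ℤ)) (-1 - (j : ℤ)) = cS A ((j : ℤ) - (k : ℤ)) := by
      rw [aM_eq_cS h (by omega) (by omega)]
      congr 1
      omega
    have h2 : conj (lam k) * lam j = fourier ((j : ℤ) - (k : ℤ)) t := by
      rw [hlam]
      simp only
      rw [← fourier_neg, ← fourier_add]
      congr 1
      ring
    rw [h1, h2]
  have hgN : gN A N t = (N : ℂ)⁻¹ * ⟪x, A x⟫_ℂ := by rw [gN, hxA]
  have hxnorm : ‖x‖ ^ 2 = (N : ℝ) := by
    have h0 := inner_self_eq_norm_sq_to_K (𝕜 := ℂ) x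
    rw [hxx] at h0
    exact_mod_cast congrArg Complex.re h0.symm
  have hineq : ‖⟪x, A x⟫_ℂ‖ ≤ ‖A‖ * N := by
    calc ‖⟪x, A x⟫_ℂ‖ ≤ ‖x‖ * ‖A x‖ := norm_inner_le_norm _ _
      _ ≤ ‖x‖ * (‖A‖ * ‖x‖) := by
          gcongr
          exact A.le_opNorm x
      _ = ‖A‖ * ‖x‖ ^ 2 := by ring
      _ = ‖A‖ * N := by rw [hxnorm]
  rw [hgN, norm_mul]
  have hNinv : ‖((N : ℂ))⁻¹‖ = (N : ℝ)⁻¹ := by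
    rw [norm_inv]
    simp
  rw [hNinv]
  have hNpos : (0 : ℝ) < N := by
    have h0 : (0 : ℕ) < N := hN
    exact_mod_cast h0
  calc (N : ℝ)⁻¹ * ‖⟪x, A x⟫_ℂ‖ ≤ (N : ℝ)⁻¹ * (‖A‖ * N) :=
        mul_le_mul_of_nonneg_left hineq (inv_nonneg.mpr hNpos.le)
      _ = ‖A‖ := by
        rw [mul_comm ‖A‖ ((N : ℝ)), ← mul_assoc, inv_mul_cancel₀ hNpos.ne', one_mul]

/-- The candidate symbol of `A`, as an element of `L²`. -/
def phi0 (hA : Pm ∘L A ∘L Pm = A)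
    (h : dualToeplitz zInf ∘L A ∘L dualToeplitz zbarInf = A) : L2 :=
  (fourierBasis (T := 2 * Real.pi)).repr.symm ⟨cS A, memℓp_cS hA h⟩

lemma fourierCoeff_phi0 (hA : Pm ∘L A ∘L Pm = A)
    (h : dualToeplitz zInf ∘L A ∘L dualToeplitz zbarInf = A) (k : ℤ) :
    fourierCoeff ((phi0 A hA h : L2) : Circ → ℂ) k = cS A k := by
  rw [← fourierBasis_repr, phi0, LinearIsometryEquiv.apply_symm_apply]

lemma fourierCoeff_GN (N : ℕ) (m : ℤ) :
    fourierCoeff ((GN A N : L2) : Circ → ℂ) m = (N : ℂ)⁻¹ * (cnt N m) * cS A m := by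
  classical
  rw [← inner_eB, GN, inner_smul_right, inner_sum]
  have hterm : ∀ p ∈ Finset.range N ×ˢ Finset.range N,
      ⟪eB m, cS A ((p.2 : ℤ) - (p.1 : ℤ)) • eB ((p.2 : ℤ) - (p.1 : ℤ))⟫_ℂ
      = if ((p.2 : ℤ) - (p.1 : ℤ) = m) then cS A m else 0 := by
    intro p _
    rw [inner_smul_right, inner_eB, fourierCoeff_eB]
    by_cases hpm : (p.2 : ℤ) - (p.1 : ℤ) = m
    · rw [if_pos hpm, if_pos hpm.symm, mul_one, hpm]
    · rw [if_neg hpm, if_neg (fun hh => hpm hh.symm), mul_zero]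
  rw [Finset.sum_congr rfl hterm, ← Finset.sum_filter, Finset.sum_const]
  rw [show (((Finset.range N ×ˢ Finset.range N).filter
      fun p => ((p.2 : ℤ) - (p.1 : ℤ) = m)).card) = cnt N m from rfl]
  rw [nsmul_eq_mul, mul_assoc]

lemma norm_sq_eq_tsum_fourierCoeff (f : L2) :
    ‖f‖ ^ 2 = ∑' i : ℤ, ‖fourierCoeff (f : Circ → ℂ) i‖ ^ 2 := by
  simp_rw [← fourierBasis_repr]
  have H1 : ‖fourierBasis.repr f‖ ^ 2 = ∑' i, ‖fourierBasis.repr f i‖ ^ 2 := by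
    apply_mod_cast lp.norm_rpow_eq_tsum ?_ (fourierBasis.repr f)
    norm_num
  rw [← H1, LinearIsometryEquiv.norm_map]

lemma norm_wN_le (N : ℕ) (m : ℤ) : ‖(N : ℂ)⁻¹ * (cnt N m : ℂ)‖ ≤ 1 := by
  rcases Nat.eq_zero_or_pos N with hN | hN
  · subst hN
    simp
  · rw [norm_mul, norm_inv]
    have h1 : ‖((N : ℕ) : ℂ)‖ = (N : ℝ) := by simp
    have h2 : ‖((cnt N m : ℕ) : ℂ)‖ = (cnt N m : ℝ) := by simp
    rw [h1, h2]
    have h3 := cnt_le N m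
    have hNpos : (0 : ℝ) < N := by exact_mod_cast hN
    rw [inv_mul_le_iff₀ hNpos, mul_one]
    exact_mod_cast h3

lemma tendsto_wN (m : ℤ) :
    Tendsto (fun N : ℕ => (N : ℂ)⁻¹ * (cnt N m : ℂ)) atTop (𝓝 1) := by
  have hmain : Tendsto (fun N : ℕ => 1 - ((m.natAbs : ℝ) : ℂ) / N) atTop (𝓝 1) := by
    have h0 : Tendsto (fun N : ℕ => ((m.natAbs : ℝ) / N : ℝ)) atTop (𝓝 0) :=
      tendsto_const_div_atTop_nhds_zero_nat _
    have h1 : Tendsto (fun N : ℕ => (((m.natAbs : ℝ) / N : ℝ) : ℂ)) atTop (𝓝 ((0 : ℝ) : ℂ)) :=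
      (Complex.continuous_ofReal.tendsto _).comp h0
    have h2 := (tendsto_const_nhds (x := (1 : ℂ))).sub h1
    simpa using h2
  apply hmain.congr'
  filter_upwards [Filter.eventually_ge_atTop (max 1 m.natAbs)] with N hN
  have hN1 : 1 ≤ N := le_trans (le_max_left _ _) hN
  have hNm : m.natAbs ≤ N := le_trans (le_max_right _ _) hN
  have hcnt := cnt_eq_of_le N m hNm
  have hNne : ((N : ℕ) : ℂ) ≠ 0 := by
    simp only [ne_eq, Nat.cast_eq_zero]
    omega
  have hcntC : ((cnt N m : ℕ) : ℂ) = (N : ℂ) - (m.natAbs : ℂ) := by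
    exact_mod_cast hcnt
  rw [hcntC]
  field_simp
  simp
  norm_cast

lemma tendsto_GN_phi0 (hA : Pm ∘L A ∘L Pm = A)
    (h : dualToeplitz zInf ∘L A ∘L dualToeplitz zbarInf = A) :
    Tendsto (fun N => GN A N) atTop (𝓝 (phi0 A hA h)) := by
  have key : ∀ N : ℕ, ‖GN A N - phi0 A hA h‖ ^ 2
      = ∑' m : ℤ, ‖((N : ℂ)⁻¹ * (cnt N m : ℂ) - 1) * cS A m‖ ^ 2 := by
    intro N
    rw [norm_sq_eq_tsum_fourierCoeff]
    congr 1
    funext m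
    congr 2
    have hsub : fourierCoeff ((GN A N - phi0 A hA h : L2) : Circ → ℂ) m
        = fourierCoeff ((GN A N : L2) : Circ → ℂ) m
          - fourierCoeff ((phi0 A hA h : L2) : Circ → ℂ) m := by
      rw [← fourierBasis_repr, ← fourierBasis_repr, ← fourierBasis_repr, map_sub]
      rfl
    rw [hsub, fourierCoeff_GN, fourierCoeff_phi0]
    ring
  have hbound : ∀ (N : ℕ) (m : ℤ),
      ‖((N : ℂ)⁻¹ * (cnt N m : ℂ) - 1) * cS A m‖ ^ 2 ≤ 4 * ‖cS A m‖ ^ 2 := by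
    intro N m
    rw [norm_mul, mul_pow]
    have h1 : ‖(N : ℂ)⁻¹ * (cnt N m : ℂ) - 1‖ ≤ 2 := by
      calc ‖(N : ℂ)⁻¹ * (cnt N m : ℂ) - 1‖
          ≤ ‖(N : ℂ)⁻¹ * (cnt N m : ℂ)‖ + ‖(1 : ℂ)‖ := norm_sub_le _ _
        _ ≤ 1 + 1 := by
            have := norm_wN_le N m
            have h1 : ‖(1 : ℂ)‖ = 1 := by simp
            rw [h1]
            linarith
        _ = 2 := by norm_num
    have hnn := norm_nonneg ((N : ℂ)⁻¹ * (cnt N m : ℂ) - 1)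
    have h2 : ‖(N : ℂ)⁻¹ * (cnt N m : ℂ) - 1‖ ^ 2 ≤ 4 := by nlinarith
    nlinarith [sq_nonneg ‖cS A m‖, norm_nonneg (cS A m)]
  have hpt : ∀ m : ℤ, Tendsto
      (fun N : ℕ => ‖((N : ℂ)⁻¹ * (cnt N m : ℂ) - 1) * cS A m‖ ^ 2) atTop (𝓝 0) := by
    intro m
    have h1 : Tendsto (fun N : ℕ => ((N : ℂ)⁻¹ * (cnt N m : ℂ) - 1) * cS A m) atTop (𝓝 0) := by
      have := ((tendsto_wN m).sub (tendsto_const_nhds (x := (1 : ℂ)))).mul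
        (tendsto_const_nhds (x := cS A m))
      simpa using this
    have h2 := (h1.norm.pow 2)
    simpa using h2
  have hsum : Summable (fun m : ℤ => 4 * ‖cS A m‖ ^ 2) := (summable_cS_sq hA h).mul_left 4
  have hlim : Tendsto (fun N : ℕ => ‖GN A N - phi0 A hA h‖ ^ 2) atTop (𝓝 0) := by
    have := tendsto_tsum_of_dominated_convergence (𝓕 := atTop)
      (f := fun (N : ℕ) (m : ℤ) => ‖((N : ℂ)⁻¹ * (cnt N m : ℂ) - 1) * cS A m‖ ^ 2)
      (g := fun _ => (0 : ℝ)) (bound := fun m => 4 * ‖cS A m‖ ^ 2) hsum hpt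
      (Filter.Eventually.of_forall fun N => by
        intro m
        rw [Real.norm_eq_abs, _root_.abs_of_nonneg (by positivity)]
        exact hbound N m)
    rw [tsum_zero] at this
    apply this.congr
    intro N
    rw [← key]
  have hnorm : Tendsto (fun N : ℕ => ‖GN A N - phi0 A hA h‖) atTop (𝓝 0) := by
    have hs := hlim.sqrt
    rw [Real.sqrt_zero] at hs
    apply hs.congr
    intro N
    rw [Real.sqrt_sq (norm_nonneg _)]
  exact tendsto_iff_norm_sub_tendsto_zero.mpr hnorm

lemma phi0_ae_bound (hA : Pm ∘L A ∘L Pm = A)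
    (h : dualToeplitz zInf ∘L A ∘L dualToeplitz zbarInf = A) :
    ∀ᵐ t ∂μC, ‖((phi0 A hA h : L2) : Circ → ℂ) t‖ ≤ ‖A‖ := by
  obtain ⟨ns, hns, hae⟩ :=
    (tendstoInMeasure_of_tendsto_Lp (tendsto_GN_phi0 A hA h)).exists_seq_tendsto_ae
  have hcoe : ∀ᵐ t ∂μC, ∀ N : ℕ, ((GN A N : L2) : Circ → ℂ) t = gN A N t := by
    rw [MeasureTheory.ae_all_iff]
    exact fun N => coeFn_GN A N
  filter_upwards [hae, hcoe] with t ht hct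
  have hlimt : Tendsto (fun i => ‖((GN A (ns i) : L2) : Circ → ℂ) t‖) atTop
      (𝓝 ‖((phi0 A hA h : L2) : Circ → ℂ) t‖) := ht.norm
  apply le_of_tendsto hlimt
  filter_upwards [Filter.eventually_ge_atTop 1] with i hi
  rw [hct]
  exact gN_bound h (ns i) (le_trans hi hns.le_apply) t

lemma exists_symbol (hA : Pm ∘L A ∘L Pm = A)
    (h : dualToeplitz zInf ∘L A ∘L dualToeplitz zbarInf = A) :
    ∃ φ : Linf, A = dualToeplitz φ := by
  have hb := phi0_ae_bound A hA h
  have hmem : MemLp ((phi0 A hA h : L2) : Circ → ℂ) ⊤ μC := by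
    refine ⟨Lp.aestronglyMeasurable _, ?_⟩
    refine lt_of_le_of_lt (eLpNorm_le_of_ae_bound hb) ?_
    rw [measure_univ, ENNReal.one_rpow, one_mul]
    exact ENNReal.ofReal_lt_top
  set φ : Linf := hmem.toLp _ with hφ
  have hφcoe : ((φ : Linf) : Circ → ℂ) =ᵐ[μC] ((phi0 A hA h : L2) : Circ → ℂ) :=
    hmem.coeFn_toLp
  have hφcoeff : ∀ k : ℤ, fourierCoeff ((φ : Linf) : Circ → ℂ) k = cS A k := by
    intro k
    rw [fourierCoeff_congr_ae hφcoe, fourierCoeff_phi0]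
  refine ⟨φ, ?_⟩
  apply CLM_ext_basis
  intro n
  apply L2_ext_inner
  intro m
  rw [entry_dualToeplitz]
  by_cases hmn : m < 0 ∧ n < 0
  · rw [if_pos hmn, hφcoeff, ← aM_eq_cS h hmn.1 hmn.2]
    rfl
  · rw [if_neg hmn]
    show aM A m n = 0
    rcases lt_or_ge m 0 with hm | hm
    · have hn : 0 ≤ n := by
        rcases not_and_or.mp hmn with h' | h'
        · exact absurd hm h'
        · omega
      exact aM_zero_right hA m hn
    · exact aM_zero_left hA hm n

end Converse

end Statement3Aux

/-- A bounded operator `A` on `(H²)^⊥` is a dual Toeplitz operator iff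
`T̃_z A T̃_z̄ = A`. -/
theorem statement3 (A : L2 →L[ℂ] L2) (hA : Pm ∘L A ∘L Pm = A) :
    (∃ φ : Linf, A = dualToeplitz φ) ↔ dualToeplitz zInf ∘L A ∘L dualToeplitz zbarInf = A := by
  constructor
  · rintro ⟨φ, rfl⟩
    apply CLM_ext_basis
    intro n
    by_cases hn : n < 0
    · apply L2_ext_inner
      intro m
      by_cases hm : m < 0
      · rw [entry_comp_shift _ hm hn]
        rw [show ⟪eB (m - 1), dualToeplitz φ (eB (n - 1))⟫_ℂ
            = if m - 1 < 0 ∧ n - 1 < 0 then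
                fourierCoeff ((φ : Linf) : Circ → ℂ) ((m - 1) - (n - 1)) else 0 from
          entry_dualToeplitz φ (m - 1) (n - 1)]
        rw [entry_dualToeplitz, if_pos ⟨by omega, by omega⟩, if_pos ⟨hm, hn⟩]
        congr 1
        omega
      · rw [entry_comp_of_left_nonneg _ (by omega), entry_dualToeplitz,
          if_neg (fun hc => hm hc.1)]
    · have h0 : dualToeplitz φ (eB n) = 0 := by
        rw [dualToeplitz]
        simp only [ContinuousLinearMap.comp_apply]
        rw [Pm_eB, if_neg hn]
        simp
      rw [comp_of_right_nonneg _ (by omega), h0]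
  · intro h
    exact exists_symbol A hA h

end GSIO
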